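/- For every x ∈ {0,1}⁴ with x₁ = 0 and s ∈ {+1,−1}: the projection Π_{Aa} applied to CNOT_{4→1}CNOT_{3→1}|Ψ_{s,x}⟩ equals CNOT_{4→1}CNOT_{3→1}|Ψ_{s,x}⟩ if x₁ ⊕ x₃ ⊕ x₄ = x₂, and equals 0 otherwise. (Steps 5–6 of the proof of Theorem 1: after the second CNOT with control D and target A, Alice's measurement M₄ has a deterministic outcome determined by x₁ ⊕ x₂ ⊕ x₃ ⊕ x₄.) -/

import Mathlib

noncomputable section

/-- View a coefficient function as a vector of the Euclidean (Hilbert) space. -/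
def ofFun {ι : Type*} [Fintype ι] (f : ι → ℂ) : EuclideanSpace ℂ ι := WithLp.toLp 2 f

/-- Transport an endomorphism of the coefficient functions to the Euclidean space. -/
def toE {ι : Type*} [Fintype ι] (T : (ι → ℂ) →ₗ[ℂ] (ι → ℂ)) :
    Module.End ℂ (EuclideanSpace ℂ ι) :=
  (WithLp.linearEquiv 2 ℂ (ι → ℂ)).symm.toLinearMap ∘ₗ T ∘ₗ
    (WithLp.linearEquiv 2 ℂ (ι → ℂ)).toLinearMap

open Classical in
/-- Diagonal orthogonal projection keeping exactly the basis vectors whose index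
satisfies `f`. -/
def diagP {ι : Type*} [Fintype ι] (f : ι → Prop) : Module.End ℂ (EuclideanSpace ℂ ι) :=
  toE (LinearMap.pi fun i => (if f i then (1 : ℂ) else 0) • LinearMap.proj i)

/-- The linear map induced by a self-inverse permutation `σ` of the basis indices:
it sends the basis vector `|x⟩` to `|σ x⟩`. -/
def permE {ι : Type*} [Fintype ι] (σ : ι → ι) : Module.End ℂ (EuclideanSpace ℂ ι) :=
  toE (LinearMap.funLeft ℂ ℂ σ)

/-- Tensor product of two vectors, realized on the product index set. -/
def tensE {ι κ : Type*} [Fintype ι] [Fintype κ]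
    (u : EuclideanSpace ℂ ι) (w : EuclideanSpace ℂ κ) : EuclideanSpace ℂ (ι × κ) :=
  ofFun fun p => u p.1 * w p.2

/-- Bitwise complement of a bit string. -/
def bcompl {n : ℕ} (x : Fin n → Fin 2) : Fin n → Fin 2 := fun i => x i + 1

/-- The sign `+1` or `−1`, indexed by a Boolean. -/
def sgn (s : Bool) : ℂ := if s then 1 else -1

/-- Computational basis vector `|x⟩` of the `n`-qubit space. -/
def ketQ {n : ℕ} (x : Fin n → Fin 2) : EuclideanSpace ℂ (Fin n → Fin 2) :=
  EuclideanSpace.single x 1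

/-- The GHZ basis state `|ψ_s⟩_x = (|x⟩ + s|x̄⟩)/√2`. -/
def ghz {n : ℕ} (s : Bool) (x : Fin n → Fin 2) : EuclideanSpace ℂ (Fin n → Fin 2) :=
  (Real.sqrt 2 : ℂ)⁻¹ • (ketQ x + sgn s • ketQ (bcompl x))

/-- The four main qubits `A,B,C,D` (positions `0,1,2,3`) together with the two
ancilla qubits `a,b` (positions `0,1` of the second factor). -/
abbrev K4 : Type := EuclideanSpace ℂ ((Fin 4 → Fin 2) × (Fin 2 → Fin 2))

/-- Basis vector of the two ancilla qubits `a, b`. -/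
def ket2 (z : Fin 2 → Fin 2) : EuclideanSpace ℂ (Fin 2 → Fin 2) :=
  EuclideanSpace.single z 1

/-- The EPR state `|φ⁺⟩_{ab} = (|00⟩ + |11⟩)/√2` of the two ancilla qubits. -/
def phiPlus : EuclideanSpace ℂ (Fin 2 → Fin 2) :=
  ofFun fun z => if z 0 = z 1 then (Real.sqrt 2 : ℂ)⁻¹ else 0

/-- The post-measurement state
`|Ψ_{s,x}⟩ = (|x⟩|x₂x₂⟩_{ab} + s|x̄⟩|x̄₂x̄₂⟩_{ab})/√2`. -/
def bigPsi (s : Bool) (x : Fin 4 → Fin 2) : K4 :=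
  (Real.sqrt 2 : ℂ)⁻¹ •
    (tensE (ketQ x) (ket2 fun _ => x 1) +
      sgn s • tensE (ketQ (bcompl x)) (ket2 fun _ => x 1 + 1))

/-- The projection `Π_{Bb} = |00⟩⟨00| + |11⟩⟨11|` on the pair `(B, b)`. -/
def projBb : Module.End ℂ K4 := diagP fun p => p.1 1 = p.2 1

/-- The projection `Π_{Aa} = |00⟩⟨00| + |11⟩⟨11|` on the pair `(A, a)`. -/
def projAa : Module.End ℂ K4 := diagP fun p => p.1 0 = p.2 0

/-- The projection `|0⟩⟨0|_A ⊗ I`. -/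
def proj0A : Module.End ℂ K4 := diagP fun p => p.1 0 = 0

/-- The CNOT gate with control the main qubit at position `c` and target the main
qubit `A` (position `0`), acting as the identity on the ancillas. -/
def cnotK (c : Fin 4) : Module.End ℂ K4 :=
  permE fun p => (Function.update p.1 0 (p.1 0 + p.1 c), p.2)


-- Auxiliary lemmas ------------------------------------------------------

lemma permE_apply {ι : Type*} [Fintype ι] (σ : ι → ι) (v : EuclideanSpace ℂ ι) (p : ι) :
    permE σ v p = v (σ p) := rfl

open Classical in
lemma diagP_apply {ι : Type*} [Fintype ι] (f : ι → Prop) (v : EuclideanSpace ℂ ι) (p : ι) :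
    diagP f v p = if f p then v p else 0 := by
  show (if f p then (1 : ℂ) else 0) • v p = _
  split_ifs <;> simp

lemma tensE_single {ι κ : Type*} [Fintype ι] [Fintype κ] [DecidableEq ι] [DecidableEq κ]
    (a : ι) (b : κ) :
    tensE (EuclideanSpace.single a (1 : ℂ)) (EuclideanSpace.single b (1 : ℂ)) =
      EuclideanSpace.single (a, b) 1 := by
  refine PiLp.ext fun p => ?_
  show (EuclideanSpace.single a (1:ℂ)) p.1 * (EuclideanSpace.single b (1:ℂ)) p.2 =
    (EuclideanSpace.single (a, b) (1:ℂ)) p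
  simp [EuclideanSpace.single_apply, Prod.ext_iff]
  split_ifs with h1 h2 h2 <;> simp_all

lemma fin2_add_add (a b : Fin 2) : a + b + b = a := by revert a b; decide

lemma sigma_invol (c : Fin 4) (hc : c ≠ 0)
    (p : (Fin 4 → Fin 2) × (Fin 2 → Fin 2)) :
    (fun q : (Fin 4 → Fin 2) × (Fin 2 → Fin 2) =>
      (Function.update q.1 0 (q.1 0 + q.1 c), q.2))
      ((fun q : (Fin 4 → Fin 2) × (Fin 2 → Fin 2) =>
        (Function.update q.1 0 (q.1 0 + q.1 c), q.2)) p) = p := by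
  refine Prod.ext ?_ rfl
  simp only [Function.update_self, Function.update_of_ne hc, Function.update_idem]
  rw [fin2_add_add, Function.update_eq_self]

lemma cnotK_single (c : Fin 4) (hc : c ≠ 0)
    (q : (Fin 4 → Fin 2) × (Fin 2 → Fin 2)) :
    cnotK c (EuclideanSpace.single q (1 : ℂ)) =
      EuclideanSpace.single (Function.update q.1 0 (q.1 0 + q.1 c), q.2) 1 := by
  refine PiLp.ext fun p => ?_
  rw [cnotK, permE_apply]
  show (EuclideanSpace.single q (1:ℂ)) _ = (EuclideanSpace.single _ (1:ℂ)) p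
  simp only [EuclideanSpace.single_apply]
  congr 1
  rw [eq_iff_iff]
  constructor
  · rintro rfl; exact (sigma_invol c hc p).symm
  · rintro rfl; exact sigma_invol c hc q

open Classical in
lemma projAa_single (q : (Fin 4 → Fin 2) × (Fin 2 → Fin 2)) :
    projAa (EuclideanSpace.single q (1 : ℂ)) =
      if q.1 0 = q.2 0 then EuclideanSpace.single q 1 else 0 := by
  refine PiLp.ext fun p => ?_
  rw [projAa, diagP_apply]
  by_cases hpq : p = q
  · subst hpq; split_ifs <;> simp_all
  · have h1 : (EuclideanSpace.single q (1:ℂ)) p = 0 := by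
      simp [EuclideanSpace.single_apply, hpq]
    split_ifs <;> simp_all

lemma fin2_par (a b c d : Fin 2) (h : a + b + c = d) :
    a + 1 + (b + 1) + (c + 1) = d + 1 := by revert a b c d; decide

lemma fin2_par' (a b c d : Fin 2) (h : a + b + c ≠ d) :
    a + 1 + (b + 1) + (c + 1) ≠ d + 1 := by revert a b c d; decide

/-- Steps 5–6 of Theorem 1: after the second CNOT, with control `D`
and target `A`, the projection `Π_{Aa}` fixes `CNOT_{4→1}CNOT_{3→1}|Ψ_{s,x}⟩` if
`x₁ ⊕ x₃ ⊕ x₄ = x₂`, and annihilates it otherwise. -/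
theorem thm1_steps56_deterministic_outcome :
    ∀ (s : Bool) (x : Fin 4 → Fin 2), x 0 = 0 →
      (x 0 + x 2 + x 3 = x 1 →
        projAa (cnotK 3 (cnotK 2 (bigPsi s x))) = cnotK 3 (cnotK 2 (bigPsi s x))) ∧
      (x 0 + x 2 + x 3 ≠ x 1 →
        projAa (cnotK 3 (cnotK 2 (bigPsi s x))) = 0) := by
  intro s x hx
  have h2 : (2 : Fin 4) ≠ 0 := by decide
  have h3 : (3 : Fin 4) ≠ 0 := by decide
  set z1 : Fin 2 → Fin 2 := fun _ => x 1 with hz1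
  set z2 : Fin 2 → Fin 2 := fun _ => x 1 + 1 with hz2
  have hb : bigPsi s x = (Real.sqrt 2 : ℂ)⁻¹ •
      (EuclideanSpace.single (x, z1) 1 +
        sgn s • EuclideanSpace.single (bcompl x, z2) 1) := by
    rw [bigPsi, ketQ, ket2, ketQ, ket2, tensE_single, tensE_single]
  have key : cnotK 3 (cnotK 2 (bigPsi s x)) = (Real.sqrt 2 : ℂ)⁻¹ •
      (EuclideanSpace.single (Function.update x 0 (x 0 + x 2 + x 3), z1) 1 +
        sgn s • EuclideanSpace.single
          (Function.update (bcompl x) 0 (bcompl x 0 + bcompl x 2 + bcompl x 3), z2) 1) := by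
    rw [hb, map_smul, map_smul, map_add, map_add, map_smul, map_smul,
      cnotK_single 2 h2, cnotK_single 2 h2, cnotK_single 3 h3, cnotK_single 3 h3]
    simp only [Function.update_self, Function.update_of_ne h3, Function.update_idem]
  constructor
  · intro h
    rw [key, map_smul, map_add, map_smul, projAa_single, projAa_single]
    rw [if_pos, if_pos]
    · show Function.update (bcompl x) 0 (bcompl x 0 + bcompl x 2 + bcompl x 3) 0 = z2 0
      rw [Function.update_self]
      exact fin2_par _ _ _ _ h
    · show Function.update x 0 (x 0 + x 2 + x 3) 0 = z1 0
      rw [Function.update_self]; exact h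
  · intro h
    rw [key, map_smul, map_add, map_smul, projAa_single, projAa_single]
    rw [if_neg, if_neg]
    · simp
    · show ¬ Function.update (bcompl x) 0 (bcompl x 0 + bcompl x 2 + bcompl x 3) 0 = z2 0
      rw [Function.update_self]
      exact fin2_par' _ _ _ _ h
    · show ¬ Function.update x 0 (x 0 + x 2 + x 3) 0 = z1 0
      rw [Function.update_self]; exact h
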